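/- In the symplectic setting, for every a ∈ V and every X ∈ gl(V)_B one has ⁅D_a, ⁅D_a, X⁆⁆ = 2·B(a, X a)·D_a. In particular, if D_a ≠ 0 then k·D_a is a one-dimensional inner ideal of the Lie algebra gl(V)_B, i.e. D_a is an extremal element of gl(V)_B. -/
import Mathlib


/-- The endomorphism `D_{a,b} : v ↦ B(v,b)·a + B(v,a)·b` of the symplectic setting. -/
def Dpair {k V : Type*} [Field k] [AddCommGroup V] [Module k V]
    (B : LinearMap.BilinForm k V) (a b : V) : Module.End k V :=
  (B.flip b).smulRight a + (B.flip a).smulRight b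

/-- The endomorphism `D_a : v ↦ B(v,a)·a` of the symplectic setting. -/
def Dsq {k V : Type*} [Field k] [AddCommGroup V] [Module k V]
    (B : LinearMap.BilinForm k V) (a : V) : Module.End k V :=
  (B.flip a).smulRight a

/-- In the symplectic setting, `⁅D_a, ⁅D_a, X⁆⁆ = 2·B(a, Xa)·D_a` for every
`X ∈ gl(V)_B`; in particular, if `D_a ≠ 0` then `D_a` is an extremal element of
`gl(V)_B`, i.e. `k·D_a` is a one-dimensional inner ideal. -/
theorem stmt6 {k V : Type*} [Field k] [AddCommGroup V] [Module k V]
    (hchar : (2 : k) ≠ 0)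
    (B : LinearMap.BilinForm k V) (halt : ∀ v : V, B v v = 0) (a : V) :
    (∀ X : Module.End k V, (∀ u v : V, B u (X v) = B v (X u)) →
      ⁅Dsq B a, ⁅Dsq B a, X⁆⁆ = (2 * B a (X a)) • Dsq B a) ∧
    (Dsq B a ≠ 0 →
      ∀ X : Module.End k V, (∀ u v : V, B u (X v) = B v (X u)) →
        ⁅Dsq B a, ⁅Dsq B a, X⁆⁆ ∈ Submodule.span k ({Dsq B a} : Set (Module.End k V))) := by
  have skew : ∀ u v : V, B u v = - B v u := by
    intro u v
    have h := halt (u + v)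
    simp only [map_add, LinearMap.add_apply, halt, zero_add, add_zero] at h
    linear_combination h
  have main : ∀ X : Module.End k V, (∀ u v : V, B u (X v) = B v (X u)) →
      ⁅Dsq B a, ⁅Dsq B a, X⁆⁆ = (2 * B a (X a)) • Dsq B a := by
    intro X hX
    ext v
    simp only [Ring.lie_def, LinearMap.sub_apply, Module.End.mul_apply, Dsq,
      LinearMap.smulRight_apply, LinearMap.BilinForm.flip_apply, map_smul, map_sub,
      LinearMap.smul_apply, smul_smul, halt, smul_zero, mul_zero, zero_smul,
      sub_zero, zero_sub, neg_smul, sub_neg_eq_add]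
    rw [skew (X a) a]
    simp only [map_zero, sub_zero]
    module
  refine ⟨main, fun _ X hX => ?_⟩
  rw [main X hX]
  exact Submodule.smul_mem _ _ (Submodule.mem_span_singleton_self _)
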